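/- Fix M > 0. For every s ∈ ℂ not lying on the trace of γ_M, the function ζ ↦ exp(exp(−ζ²))/(s−ζ) is integrable along γ_M (each of the three parametrized Lebesgue integrals defining the contour integral converges absolutely), and the function I(s) = (1/(2πi)) ∫_{γ_M} exp(exp(−ζ²))/(s−ζ) dζ is holomorphic on the open set ℂ minus the trace of γ_M. -/

import Mathlib

open MeasureTheory intervalIntegral Filter

/-- The contour integral of `g` along the clockwise contour `γ_M`, consisting of the
right branch `{π/(2τ)+iτ : τ ≥ M}` traversed downward, the horizontal segment
`{σ+iM : |σ| ≤ π/(2M)}` traversed right to left, and the left branch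
`{−π/(2τ)+iτ : τ ≥ M}` traversed upward. -/
noncomputable def gammaInt (M : ℝ) (g : ℂ → ℂ) : ℂ :=
  (∫ τ in Set.Ioi M, g (((-(Real.pi / (2 * τ)) : ℝ) : ℂ) + τ * Complex.I) *
      (((Real.pi / (2 * τ ^ 2) : ℝ) : ℂ) + Complex.I))
  - (∫ τ in Set.Ioi M, g (((Real.pi / (2 * τ) : ℝ) : ℂ) + τ * Complex.I) *
      (Complex.I - ((Real.pi / (2 * τ ^ 2) : ℝ) : ℂ)))
  - ∫ σ in (-(Real.pi / (2 * M)))..(Real.pi / (2 * M)), g ((σ : ℂ) + M * Complex.I)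

/-- Absolute convergence of the three parametrized Lebesgue integrals defining the
contour integral of `g` along `γ_M`. -/
def GammaIntegrable (M : ℝ) (g : ℂ → ℂ) : Prop :=
  MeasureTheory.IntegrableOn (fun τ : ℝ =>
    g (((-(Real.pi / (2 * τ)) : ℝ) : ℂ) + τ * Complex.I) *
      (((Real.pi / (2 * τ ^ 2) : ℝ) : ℂ) + Complex.I)) (Set.Ioi M) ∧
  MeasureTheory.IntegrableOn (fun τ : ℝ =>
    g (((Real.pi / (2 * τ) : ℝ) : ℂ) + τ * Complex.I) *
      (Complex.I - ((Real.pi / (2 * τ ^ 2) : ℝ) : ℂ))) (Set.Ioi M) ∧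
  IntervalIntegrable (fun σ : ℝ => g ((σ : ℂ) + M * Complex.I))
    MeasureTheory.volume (-(Real.pi / (2 * M))) (Real.pi / (2 * M))

/-- The trace (image) of the contour `γ_M`. -/
def gammaTrace (M : ℝ) : Set ℂ :=
  {ζ : ℂ | (M ≤ ζ.im ∧ |ζ.re| = Real.pi / (2 * ζ.im)) ∨
    (ζ.im = M ∧ |ζ.re| ≤ Real.pi / (2 * M))}

/-- The open region `D_M` lying to the right of `γ_M` as it is traversed clockwise. -/
def DM (M : ℝ) : Set ℂ := {ζ : ℂ | M < ζ.im ∧ |ζ.re| < Real.pi / (2 * ζ.im)}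

/-- Norm of the double exponential at a point `σ + iτ`. -/
lemma norm_exp_exp_eq (σ τ : ℝ) :
    ‖Complex.exp (Complex.exp (-((σ:ℂ) + τ*Complex.I)^2))‖
      = Real.exp (Real.exp (τ^2 - σ^2) * Real.cos (2*σ*τ)) := by
  rw [Complex.norm_exp, Complex.exp_re]
  have hre : (-((σ:ℂ) + τ*Complex.I)^2).re = τ^2 - σ^2 := by
    simp [pow_two, Complex.add_re, Complex.mul_re, Complex.add_im, Complex.mul_im]
  have him : (-((σ:ℂ) + τ*Complex.I)^2).im = -(2*σ*τ) := by
    simp [pow_two, Complex.add_re, Complex.mul_re, Complex.add_im, Complex.mul_im]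
    ring
  rw [hre, him, Real.cos_neg]

lemma isClosed_gammaTrace {M : ℝ} (hM : 0 < M) : IsClosed (gammaTrace M) := by
  have : gammaTrace M = ({ζ : ℂ | M ≤ ζ.im} ∩ {ζ : ℂ | |ζ.re| * (2 * ζ.im) = Real.pi})
      ∪ ({ζ : ℂ | ζ.im = M} ∩ {ζ : ℂ | |ζ.re| ≤ Real.pi / (2 * M)}) := by
    ext ζ
    simp only [gammaTrace, Set.mem_setOf_eq, Set.mem_union, Set.mem_inter_iff]
    constructor
    · rintro (⟨h1, h2⟩ | h)
      · refine Or.inl ⟨h1, ?_⟩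
        have him : (0:ℝ) < ζ.im := lt_of_lt_of_le hM h1
        rw [h2]; field_simp
      · exact Or.inr h
    · rintro (⟨h1, h2⟩ | h)
      · refine Or.inl ⟨h1, ?_⟩
        have him : (0:ℝ) < ζ.im := lt_of_lt_of_le hM h1
        rw [eq_div_iff (by positivity)]; exact h2
      · exact Or.inr h
  rw [this]
  apply IsClosed.union
  · exact (isClosed_le continuous_const Complex.continuous_im).inter
      (isClosed_eq (by continuity) continuous_const)
  · exact (isClosed_eq Complex.continuous_im continuous_const).inter
      (isClosed_le (by continuity) continuous_const)

lemma mem_trace_branch {M : ℝ} {σf : ℝ → ℝ}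
    (hσabs : ∀ τ ∈ Set.Ioi M, |σf τ| = Real.pi / (2 * τ)) {τ : ℝ} (hτ : τ ∈ Set.Ioi M) :
    ((σf τ : ℂ) + τ * Complex.I) ∈ gammaTrace M := by
  left
  constructor
  · simpa using le_of_lt hτ
  · simpa using hσabs τ hτ

lemma mem_trace_seg {M : ℝ} {σ : ℝ}
    (h : |σ| ≤ Real.pi / (2 * M)) : ((σ : ℂ) + M * Complex.I) ∈ gammaTrace M := by
  right
  constructor
  · simp
  · simpa using h

lemma nonempty_gammaTrace {M : ℝ} (hM : 0 < M) : (gammaTrace M).Nonempty := by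
  refine ⟨((0:ℝ):ℂ) + M * Complex.I, mem_trace_seg ?_⟩
  simp only [abs_zero]
  positivity

/-- Main workhorse for the two unbounded branches of the contour. -/
lemma branch_lemma {M : ℝ} (hM : 0 < M) {σf : ℝ → ℝ}
    (hσc : ContinuousOn σf (Set.Ioi M))
    (hσabs : ∀ τ ∈ Set.Ioi M, |σf τ| = Real.pi / (2 * τ))
    (hσcos : ∀ τ ∈ Set.Ioi M, Real.cos (2 * σf τ * τ) = -1)
    {m : ℝ → ℂ} (hmc : ContinuousOn m (Set.Ioi M)) {K : ℝ}
    (hmK : ∀ τ ∈ Set.Ioi M, ‖m τ‖ ≤ K)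
    {s : ℂ} (hs : s ∉ gammaTrace M) :
    IntegrableOn (fun τ : ℝ =>
        Complex.exp (Complex.exp (-((σf τ : ℂ) + τ * Complex.I)^2)) /
          (s - ((σf τ : ℂ) + τ * Complex.I)) * m τ) (Set.Ioi M)
    ∧ DifferentiableAt ℂ (fun x : ℂ => ∫ τ in Set.Ioi M,
        Complex.exp (Complex.exp (-((σf τ : ℂ) + τ * Complex.I)^2)) /
          (x - ((σf τ : ℂ) + τ * Complex.I)) * m τ) s := by
  have hcl := isClosed_gammaTrace hM
  have hne := nonempty_gammaTrace hM
  set ζ : ℝ → ℂ := fun τ => ((σf τ : ℂ) + τ * Complex.I) with hζdef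
  set A : ℝ → ℂ := fun τ => Complex.exp (Complex.exp (-(ζ τ)^2)) with hAdef
  set d : ℝ := Metric.infDist s (gammaTrace M) with hddef
  have hd : 0 < d := (hcl.notMem_iff_infDist_pos hne).1 hs
  have htr : ∀ τ ∈ Set.Ioi M, ζ τ ∈ gammaTrace M := fun τ hτ => mem_trace_branch hσabs hτ
  have hK0 : 0 ≤ K := le_trans (norm_nonneg _) (hmK (M+1) (Set.mem_Ioi.mpr (by linarith)))
  set C : ℝ := Real.exp (Real.pi^2/(4*M^2)) with hCdef
  have hC0 : 0 < C := Real.exp_pos _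
  have hb : ∀ τ ∈ Set.Ioi M, ‖A τ‖ ≤ C * Real.exp (-τ^2) := by
    intro τ hτ
    have hτ0 : 0 < τ := hM.trans hτ
    rw [hAdef, hζdef]
    simp only []
    rw [norm_exp_exp_eq, hσcos τ hτ, mul_neg_one]
    have hσ2 : σf τ^2 ≤ Real.pi^2/(4*M^2) := by
      rw [← sq_abs, hσabs τ hτ, div_pow, mul_pow]
      have h4 : (2:ℝ)^2 * M^2 ≤ 2^2 * τ^2 := by nlinarith [le_of_lt (Set.mem_Ioi.1 hτ)]
      exact div_le_div_of_nonneg_left (by positivity) (by positivity) (by nlinarith)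
    have hxe : τ^2 - σf τ^2 ≤ Real.exp (τ^2 - σf τ^2) := by
      linarith [Real.add_one_le_exp (τ^2 - σf τ^2)]
    rw [hCdef, ← Real.exp_add]
    exact Real.exp_le_exp.mpr (by linarith)
  have hdist : ∀ x ∈ Metric.ball s (d/2), ∀ τ ∈ Set.Ioi M, d/2 ≤ ‖x - ζ τ‖ := by
    intro x hx τ hτ
    have h1 : d ≤ dist s (ζ τ) := Metric.infDist_le_dist_of_mem (htr τ hτ)
    have h2 : dist s x < d/2 := by rw [Metric.mem_ball] at hx; rwa [dist_comm] at hx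
    have h3 : dist s (ζ τ) ≤ dist s x + dist x (ζ τ) := dist_triangle _ _ _
    rw [← dist_eq_norm]
    linarith
  have hne' : ∀ x ∈ Metric.ball s (d/2), ∀ τ ∈ Set.Ioi M, x - ζ τ ≠ 0 := by
    intro x hx τ hτ
    have := hdist x hx τ hτ
    intro h0
    rw [h0, norm_zero] at this
    linarith
  have hsball : s ∈ Metric.ball s (d/2) := Metric.mem_ball_self (by linarith)
  have hζc : ContinuousOn ζ (Set.Ioi M) := by
    apply ContinuousOn.add
    · exact Complex.continuous_ofReal.comp_continuousOn hσc
    · exact (Complex.continuous_ofReal.mul continuous_const).continuousOn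
  have hAc : ContinuousOn A (Set.Ioi M) :=
    Complex.continuous_exp.comp_continuousOn
      (Complex.continuous_exp.comp_continuousOn ((hζc.pow 2).neg))
  have hFc : ∀ x ∈ Metric.ball s (d/2),
      ContinuousOn (fun τ => A τ / (x - ζ τ) * m τ) (Set.Ioi M) := by
    intro x hx
    exact (hAc.div (continuousOn_const.sub hζc) (fun τ hτ => hne' x hx τ hτ)).mul hmc
  have hF'c : ContinuousOn (fun τ => -(A τ / (s - ζ τ)^2) * m τ) (Set.Ioi M) := by
    refine ContinuousOn.mul ?_ hmc
    refine ContinuousOn.neg ?_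
    exact hAc.div ((continuousOn_const.sub hζc).pow 2)
      (fun τ hτ => pow_ne_zero 2 (hne' s hsball τ hτ))
  have hexp : IntegrableOn (fun τ : ℝ => Real.exp (-τ^2)) (Set.Ioi M) := by
    have := (integrable_exp_neg_mul_sq (b := 1) one_pos).integrableOn (s := Set.Ioi M)
    simpa using this
  have hFint : IntegrableOn (fun τ => A τ / (s - ζ τ) * m τ) (Set.Ioi M) := by
    apply Integrable.mono' (g := fun τ => C * Real.exp (-τ^2) / (d/2) * K)
    · exact (((hexp.const_mul C).div_const _).mul_const K)
    · exact (hFc s hsball).aestronglyMeasurable measurableSet_Ioi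
    · rw [ae_restrict_iff' measurableSet_Ioi]
      filter_upwards with τ
      intro hτ
      rw [norm_mul, norm_div]
      gcongr
      · exact hb τ hτ
      · exact hdist s hsball τ hτ
      · exact hmK τ hτ
  refine ⟨hFint, ?_⟩
  have key := _root_.hasDerivAt_integral_of_dominated_loc_of_deriv_le
    (F := fun (x : ℂ) (τ : ℝ) => A τ / (x - ζ τ) * m τ)
    (F' := fun (x : ℂ) (τ : ℝ) => -(A τ / (x - ζ τ)^2) * m τ)
    (x₀ := s) (μ := volume.restrict (Set.Ioi M))
    (bound := fun τ => C * Real.exp (-τ^2) / (d/2)^2 * K)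
    (Metric.ball_mem_nhds s (by linarith : (0:ℝ) < d/2))
    ?_ hFint ?_ ?_ ?_ ?_
  · exact key.2.differentiableAt
  · refine eventually_of_mem (Metric.ball_mem_nhds (ε := d/2) s (by linarith)) ?_
    intro x hx
    exact ((hFc x hx).aestronglyMeasurable measurableSet_Ioi)
  · exact hF'c.aestronglyMeasurable measurableSet_Ioi
  · rw [ae_restrict_iff' measurableSet_Ioi]
    filter_upwards with τ
    intro hτ x hx
    rw [norm_mul, norm_neg, norm_div, norm_pow]
    gcongr
    · exact hb τ hτ
    · exact hdist x hx τ hτ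
    · exact hmK τ hτ
  · exact (((hexp.const_mul C).div_const _).mul_const K)
  · rw [ae_restrict_iff' measurableSet_Ioi]
    filter_upwards with τ
    intro hτ x hx
    have h1 : HasDerivAt (fun y : ℂ => (y - ζ τ)⁻¹) (-1/(x - ζ τ)^2) x := by
      have := ((hasDerivAt_id x).sub_const (ζ τ)).inv (hne' x hx τ hτ)
      exact this
    have h2 := (h1.const_mul (A τ)).mul_const (m τ)
    have heq : (fun y : ℂ => A τ * (y - ζ τ)⁻¹ * m τ) = fun y : ℂ => A τ / (y - ζ τ) * m τ := by
      funext y; rw [div_eq_mul_inv]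
    rw [heq] at h2
    exact h2.congr_deriv (by ring)

/-- Main workhorse for the horizontal segment of the contour. -/
lemma seg_lemma {M : ℝ} (hM : 0 < M) {s : ℂ} (hs : s ∉ gammaTrace M) :
    IntervalIntegrable (fun σ : ℝ =>
      Complex.exp (Complex.exp (-((σ:ℂ) + M*Complex.I)^2)) / (s - ((σ:ℂ) + M*Complex.I)))
      volume (-(Real.pi/(2*M))) (Real.pi/(2*M))
    ∧ DifferentiableAt ℂ (fun x : ℂ => ∫ σ in (-(Real.pi/(2*M)))..(Real.pi/(2*M)),
      Complex.exp (Complex.exp (-((σ:ℂ) + M*Complex.I)^2)) / (x - ((σ:ℂ) + M*Complex.I))) s := by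
  have hcl := isClosed_gammaTrace hM
  have hne := nonempty_gammaTrace hM
  set a : ℝ := -(Real.pi/(2*M)) with hadef
  set b : ℝ := Real.pi/(2*M) with hbdef
  have hb0 : 0 ≤ b := by positivity
  have hab : a ≤ b := by rw [hadef]; linarith
  set ζ : ℝ → ℂ := fun σ => ((σ:ℂ) + M * Complex.I) with hζdef
  set A : ℝ → ℂ := fun σ => Complex.exp (Complex.exp (-(ζ σ)^2)) with hAdef
  set d : ℝ := Metric.infDist s (gammaTrace M) with hddef
  have hd : 0 < d := (hcl.notMem_iff_infDist_pos hne).1 hs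
  have htr : ∀ σ ∈ Set.Icc a b, ζ σ ∈ gammaTrace M := by
    intro σ hσ
    exact mem_trace_seg (abs_le.mpr ⟨hσ.1, hσ.2⟩)
  have hdist : ∀ x ∈ Metric.ball s (d/2), ∀ σ ∈ Set.Icc a b, d/2 ≤ ‖x - ζ σ‖ := by
    intro x hx σ hσ
    have h1 : d ≤ dist s (ζ σ) := Metric.infDist_le_dist_of_mem (htr σ hσ)
    have h2 : dist s x < d/2 := by rw [Metric.mem_ball] at hx; rwa [dist_comm] at hx
    have h3 : dist s (ζ σ) ≤ dist s x + dist x (ζ σ) := dist_triangle _ _ _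
    rw [← dist_eq_norm]
    linarith
  have hne' : ∀ x ∈ Metric.ball s (d/2), ∀ σ ∈ Set.Icc a b, x - ζ σ ≠ 0 := by
    intro x hx σ hσ h0
    have := hdist x hx σ hσ
    rw [h0, norm_zero] at this
    linarith
  have hsball : s ∈ Metric.ball s (d/2) := Metric.mem_ball_self (by linarith)
  have hζc : Continuous ζ := by
    exact (Complex.continuous_ofReal).add continuous_const
  have hAc : Continuous A :=
    Complex.continuous_exp.comp (Complex.continuous_exp.comp ((hζc.pow 2).neg))
  have hFc : ∀ x ∈ Metric.ball s (d/2),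
      ContinuousOn (fun σ => A σ / (x - ζ σ)) (Set.Icc a b) := by
    intro x hx
    exact hAc.continuousOn.div (continuousOn_const.sub hζc.continuousOn)
      (fun σ hσ => hne' x hx σ hσ)
  have hbA : ∀ σ : ℝ, ‖A σ‖ ≤ Real.exp (Real.exp (M^2)) := by
    intro σ
    rw [hAdef, hζdef]
    simp only []
    rw [norm_exp_exp_eq]
    apply Real.exp_le_exp.mpr
    calc Real.exp (M^2 - σ^2) * Real.cos (2*σ*M)
        ≤ Real.exp (M^2 - σ^2) * 1 :=
          mul_le_mul_of_nonneg_left (Real.cos_le_one _) (Real.exp_pos _).le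
      _ = Real.exp (M^2 - σ^2) := mul_one _
      _ ≤ Real.exp (M^2) := Real.exp_le_exp.mpr (by nlinarith [sq_nonneg σ])
  have hII : IntervalIntegrable (fun σ => A σ / (s - ζ σ)) volume a b := by
    apply ContinuousOn.intervalIntegrable
    rw [Set.uIcc_of_le hab]
    exact hFc s hsball
  refine ⟨hII, ?_⟩
  have hrw : (fun x : ℂ => ∫ σ in a..b, A σ / (x - ζ σ))
      = fun x : ℂ => ∫ σ in Set.Ioc a b, A σ / (x - ζ σ) := by
    funext x
    rw [intervalIntegral.integral_of_le hab]
  rw [hrw]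
  have key := _root_.hasDerivAt_integral_of_dominated_loc_of_deriv_le
    (F := fun (x : ℂ) (σ : ℝ) => A σ / (x - ζ σ))
    (F' := fun (x : ℂ) (σ : ℝ) => -(A σ / (x - ζ σ)^2))
    (x₀ := s) (μ := volume.restrict (Set.Ioc a b))
    (bound := fun _ => Real.exp (Real.exp (M^2)) / (d/2)^2)
    (Metric.ball_mem_nhds s (by linarith : (0:ℝ) < d/2))
    ?_ ?_ ?_ ?_ ?_ ?_
  · exact key.2.differentiableAt
  · refine eventually_of_mem (Metric.ball_mem_nhds (ε := d/2) s (by linarith)) ?_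
    intro x hx
    exact ((hFc x hx).mono Set.Ioc_subset_Icc_self).aestronglyMeasurable measurableSet_Ioc
  · exact hII.1
  · refine ContinuousOn.aestronglyMeasurable ?_ measurableSet_Ioc
    refine ContinuousOn.neg ?_
    refine (hAc.continuousOn.div ((continuousOn_const.sub hζc.continuousOn).pow 2) ?_)
    intro σ hσ
    exact pow_ne_zero 2 (hne' s hsball σ (Set.Ioc_subset_Icc_self hσ))
  · rw [ae_restrict_iff' measurableSet_Ioc]
    filter_upwards with σ
    intro hσ x hx
    rw [norm_neg, norm_div, norm_pow]
    gcongr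
    · exact hbA σ
    · exact hdist x hx σ (Set.Ioc_subset_Icc_self hσ)
  · exact integrableOn_const measure_Ioc_lt_top.ne
  · rw [ae_restrict_iff' measurableSet_Ioc]
    filter_upwards with σ
    intro hσ x hx
    have hne0 := hne' x hx σ (Set.Ioc_subset_Icc_self hσ)
    have h1 : HasDerivAt (fun y : ℂ => (y - ζ σ)⁻¹) (-1/(x - ζ σ)^2) x := by
      have := ((hasDerivAt_id x).sub_const (ζ σ)).inv hne0
      exact this
    have h2 := h1.const_mul (A σ)
    have heq : (fun y : ℂ => A σ * (y - ζ σ)⁻¹) = fun y : ℂ => A σ / (y - ζ σ) := by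
      funext y; rw [div_eq_mul_inv]
    rw [heq] at h2
    exact h2.congr_deriv (by ring)

lemma left_branch_data {M : ℝ} (hM : 0 < M) :
    ContinuousOn (fun τ : ℝ => -(Real.pi / (2 * τ))) (Set.Ioi M) ∧
    (∀ τ ∈ Set.Ioi M, |(fun τ : ℝ => -(Real.pi / (2 * τ))) τ| = Real.pi / (2 * τ)) ∧
    (∀ τ ∈ Set.Ioi M, Real.cos (2 * (fun τ : ℝ => -(Real.pi / (2 * τ))) τ * τ) = -1) := by
  refine ⟨?_, ?_, ?_⟩
  · refine ContinuousOn.neg ?_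
    exact continuousOn_const.div (continuous_const.mul continuous_id).continuousOn
      (fun τ hτ => by have : (0:ℝ) < τ := lt_trans hM hτ; positivity)
  · intro τ hτ
    have hτ0 : (0:ℝ) < τ := lt_trans hM hτ
    rw [abs_neg, abs_of_nonneg (by positivity)]
  · intro τ hτ
    have hτ0 : (0:ℝ) < τ := lt_trans hM hτ
    have h : 2 * -(Real.pi / (2 * τ)) * τ = -Real.pi := by field_simp
    rw [h, Real.cos_neg, Real.cos_pi]

lemma right_branch_data {M : ℝ} (hM : 0 < M) :
    ContinuousOn (fun τ : ℝ => Real.pi / (2 * τ)) (Set.Ioi M) ∧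
    (∀ τ ∈ Set.Ioi M, |(fun τ : ℝ => Real.pi / (2 * τ)) τ| = Real.pi / (2 * τ)) ∧
    (∀ τ ∈ Set.Ioi M, Real.cos (2 * (fun τ : ℝ => Real.pi / (2 * τ)) τ * τ) = -1) := by
  refine ⟨?_, ?_, ?_⟩
  · exact continuousOn_const.div (continuous_const.mul continuous_id).continuousOn
      (fun τ hτ => by have : (0:ℝ) < τ := lt_trans hM hτ; positivity)
  · intro τ hτ
    have hτ0 : (0:ℝ) < τ := lt_trans hM hτ
    exact abs_of_nonneg (by positivity)
  · intro τ hτ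
    have hτ0 : (0:ℝ) < τ := lt_trans hM hτ
    have h : 2 * (Real.pi / (2 * τ)) * τ = Real.pi := by field_simp
    rw [h, Real.cos_pi]

lemma mult_left_data {M : ℝ} (hM : 0 < M) :
    ContinuousOn (fun τ : ℝ => (((Real.pi / (2 * τ ^ 2) : ℝ) : ℂ) + Complex.I)) (Set.Ioi M) ∧
    ∀ τ ∈ Set.Ioi M, ‖(((Real.pi / (2 * τ ^ 2) : ℝ) : ℂ) + Complex.I)‖
      ≤ Real.pi / (2 * M ^ 2) + 1 := by
  constructor
  · refine ContinuousOn.add ?_ continuousOn_const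
    refine Complex.continuous_ofReal.comp_continuousOn ?_
    exact continuousOn_const.div (continuous_const.mul (continuous_pow 2)).continuousOn
      (fun τ hτ => by have : (0:ℝ) < τ := lt_trans hM hτ; positivity)
  · intro τ hτ
    have hτ0 : (0:ℝ) < τ := lt_trans hM hτ
    have hMτ : M ≤ τ := le_of_lt hτ
    refine (norm_add_le _ _).trans ?_
    rw [Complex.norm_real, Complex.norm_I,
      Real.norm_eq_abs, abs_of_nonneg (by positivity)]
    have : Real.pi / (2 * τ ^ 2) ≤ Real.pi / (2 * M ^ 2) := by gcongr
    linarith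

lemma mult_right_data {M : ℝ} (hM : 0 < M) :
    ContinuousOn (fun τ : ℝ => (Complex.I - ((Real.pi / (2 * τ ^ 2) : ℝ) : ℂ))) (Set.Ioi M) ∧
    ∀ τ ∈ Set.Ioi M, ‖(Complex.I - ((Real.pi / (2 * τ ^ 2) : ℝ) : ℂ))‖
      ≤ Real.pi / (2 * M ^ 2) + 1 := by
  constructor
  · refine ContinuousOn.sub continuousOn_const ?_
    refine Complex.continuous_ofReal.comp_continuousOn ?_
    exact continuousOn_const.div (continuous_const.mul (continuous_pow 2)).continuousOn
      (fun τ hτ => by have : (0:ℝ) < τ := lt_trans hM hτ; positivity)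
  · intro τ hτ
    have hτ0 : (0:ℝ) < τ := lt_trans hM hτ
    have hMτ : M ≤ τ := le_of_lt hτ
    refine (norm_sub_le _ _).trans ?_
    rw [Complex.norm_real, Complex.norm_I,
      Real.norm_eq_abs, abs_of_nonneg (by positivity)]
    have : Real.pi / (2 * τ ^ 2) ≤ Real.pi / (2 * M ^ 2) := by gcongr
    linarith

theorem statement13 (M : ℝ) (hM : 0 < M) :
    (∀ s : ℂ, s ∉ gammaTrace M →
      GammaIntegrable M (fun ζ : ℂ => Complex.exp (Complex.exp (-ζ ^ 2)) / (s - ζ))) ∧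
    DifferentiableOn ℂ
      (fun s : ℂ => (1 / (2 * Real.pi * Complex.I)) *
        gammaInt M (fun ζ : ℂ => Complex.exp (Complex.exp (-ζ ^ 2)) / (s - ζ)))
      (gammaTrace M)ᶜ := by
  obtain ⟨hLc, hLabs, hLcos⟩ := left_branch_data hM
  obtain ⟨hRc, hRabs, hRcos⟩ := right_branch_data hM
  obtain ⟨hmLc, hmLK⟩ := mult_left_data hM
  obtain ⟨hmRc, hmRK⟩ := mult_right_data hM
  constructor
  · intro s hs
    refine ⟨?_, ?_, ?_⟩
    · exact (branch_lemma hM hLc hLabs hLcos hmLc hmLK hs).1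
    · exact (branch_lemma hM hRc hRabs hRcos hmRc hmRK hs).1
    · exact (seg_lemma hM hs).1
  · intro s hs
    apply DifferentiableAt.differentiableWithinAt
    have h1 := (branch_lemma hM hLc hLabs hLcos hmLc hmLK hs).2
    have h2 := (branch_lemma hM hRc hRabs hRcos hmRc hmRK hs).2
    have h3 := (seg_lemma hM hs).2
    unfold gammaInt
    exact ((h1.sub h2).sub h3).const_mul _
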